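/- Suppose (H,+,0) is an Abelian group, B ⊆ H is quasi independent, A' ⊆ A ⊆ H, A+A ⊆ B+B, |A'| = 4, and A'+c ⊆ B for some c ∈ H. Then A−c ⊆ B. -/

import Mathlib

open Pointwise

attribute [local instance 0] Classical.propDecidable

def QuasiIndep {H : Type*} [AddCommGroup H] (B : Set H) : Prop :=
  8 ≤ B.encard ∧
  ∀ (b : Fin 8 → H) (ι : Fin 8 → ℤ),
    Function.Injective b → (∀ i, b i ∈ B) → (∀ i, |ι i| ≤ 2) →
    (∃ i, ι i ≠ 0) → ∑ i, ι i • b i ≠ 0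

private lemma indSum {H : Type*} [AddCommGroup H] {b : Fin 8 → H}
    (hb : Function.Injective b) {v : H} (hv : ∃ i, b i = v) :
    ∑ i, (if b i = v then (1 : ℤ) else 0) • b i = v := by
  obtain ⟨i₀, rfl⟩ := hv
  have h : ∀ i, (if b i = b i₀ then (1 : ℤ) else 0) • b i = if i = i₀ then b i₀ else 0 := by
    intro i
    rcases eq_or_ne i i₀ with rfl | h
    · simp
    · have : b i ≠ b i₀ := fun hh => h (hb hh)
      simp [this, h]
  simp [h]

private lemma keyLem {H : Type*} [AddCommGroup H] (B : Set H) (hB : QuasiIndep B)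
    (x β1 βj b1 b1' bj bj' : H)
    (hβ1 : β1 ∈ B) (hβj : βj ∈ B) (hb1 : b1 ∈ B) (hb1' : b1' ∈ B)
    (hbj : bj ∈ B) (hbj' : bj' ∈ B)
    (e1 : x + β1 = b1 + b1') (ej : x + βj = bj + bj')
    (hne : β1 ≠ βj) (h1 : β1 ≠ b1) (h1' : β1 ≠ b1')
    (good1 : ¬(b1 = b1' ∧ b1 = βj)) (goodj : ¬(bj = bj' ∧ bj = β1)) : False := by
  -- the six relevant elements of B
  set S : Set H := {β1, βj, b1, b1', bj, bj'} with hS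
  have hSB : S ⊆ B := by
    rw [hS]
    intro y hy
    simp only [Set.mem_insert_iff, Set.mem_singleton_iff] at hy
    rcases hy with rfl | rfl | rfl | rfl | rfl | rfl <;> assumption
  have hScard : S.encard ≤ 8 := by
    rw [hS]
    refine le_trans (Set.encard_insert_le _ _) ?_
    refine le_trans (add_le_add_left (Set.encard_insert_le _ _) 1) ?_
    refine le_trans (add_le_add_left (add_le_add_left (Set.encard_insert_le _ _) 1) 1) ?_
    refine le_trans (add_le_add_left (add_le_add_left (add_le_add_left
      (Set.encard_insert_le _ _) 1) 1) 1) ?_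
    refine le_trans (add_le_add_left (add_le_add_left (add_le_add_left (add_le_add_left
      (Set.encard_insert_le _ _) 1) 1) 1) 1) ?_
    have : ({bj'} : Set H).encard = 1 := Set.encard_singleton _
    rw [this]
    decide
  obtain ⟨T', hST', hT'B, hT'card⟩ :=
    Set.exists_superset_subset_encard_eq hSB hScard hB.1
  have hT'fin : T'.Finite := Set.finite_of_encard_eq_coe (k := 8) (by exact_mod_cast hT'card)
  set T : Finset H := hT'fin.toFinset with hT
  have hTcard : T.card = 8 := by
    have := hT'fin.encard_eq_coe_toFinset_card
    rw [hT'card] at this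
    exact_mod_cast this.symm
  set e := T.equivFinOfCardEq hTcard with he
  set b : Fin 8 → H := fun i => (e.symm i : H) with hbdef
  have hbinj : Function.Injective b := by
    intro i j hij
    exact e.symm.injective (Subtype.ext hij)
  have hbmemT : ∀ v, v ∈ S → ∃ i, b i = v := by
    intro v hv
    have hvT : v ∈ T := hT'fin.mem_toFinset.2 (hST' hv)
    exact ⟨e ⟨v, hvT⟩, by simp [hbdef]⟩
  have hbB : ∀ i, b i ∈ B := by
    intro i
    have : (e.symm i : H) ∈ T := (e.symm i).2
    exact hT'B (hT'fin.mem_toFinset.1 this)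
  -- coefficients
  set ι : Fin 8 → ℤ := fun i =>
    ((if b i = b1 then (1 : ℤ) else 0) + (if b i = b1' then 1 else 0) +
      (if b i = βj then 1 else 0)) -
    ((if b i = bj then (1 : ℤ) else 0) + (if b i = bj' then 1 else 0) +
      (if b i = β1 then 1 else 0)) with hι
  have habs : ∀ i, |ι i| ≤ 2 := by
    intro i
    have hp2 : ((if b i = b1 then (1 : ℤ) else 0) + (if b i = b1' then 1 else 0) +
        (if b i = βj then 1 else 0)) ≤ 2 := by
      split_ifs with hc1 hc2 hc3 <;> try omega
      exact absurd ⟨hc1.symm.trans hc2, hc1.symm.trans hc3⟩ good1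
    have hp0 : (0 : ℤ) ≤ ((if b i = b1 then (1 : ℤ) else 0) + (if b i = b1' then 1 else 0) +
        (if b i = βj then 1 else 0)) := by
      split_ifs <;> omega
    have hn2 : ((if b i = bj then (1 : ℤ) else 0) + (if b i = bj' then 1 else 0) +
        (if b i = β1 then 1 else 0)) ≤ 2 := by
      split_ifs with hc1 hc2 hc3 <;> try omega
      exact absurd ⟨hc1.symm.trans hc2, hc1.symm.trans hc3⟩ goodj
    have hn0 : (0 : ℤ) ≤ ((if b i = bj then (1 : ℤ) else 0) + (if b i = bj' then 1 else 0) +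
        (if b i = β1 then 1 else 0)) := by
      split_ifs <;> omega
    simp only [hι]
    rw [abs_le]
    omega
  have hnontriv : ∃ i, ι i ≠ 0 := by
    obtain ⟨i, hi⟩ := hbmemT β1 (by rw [hS]; left; rfl)
    refine ⟨i, ?_⟩
    simp only [hι, hi, if_neg h1, if_neg h1', if_neg hne, if_pos rfl]
    split_ifs <;> omega
  have hsum : ∑ i, ι i • b i = 0 := by
    have expand : ∀ i, ι i • b i =
        (if b i = b1 then (1 : ℤ) else 0) • b i + (if b i = b1' then (1 : ℤ) else 0) • b i +
        (if b i = βj then (1 : ℤ) else 0) • b i -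
        ((if b i = bj then (1 : ℤ) else 0) • b i + (if b i = bj' then (1 : ℤ) else 0) • b i +
        (if b i = β1 then (1 : ℤ) else 0) • b i) := by
      intro i
      rw [hι]
      rw [sub_smul, add_smul, add_smul, add_smul, add_smul]
    rw [Finset.sum_congr rfl (fun i _ => expand i)]
    rw [Finset.sum_sub_distrib, Finset.sum_add_distrib, Finset.sum_add_distrib,
      Finset.sum_add_distrib, Finset.sum_add_distrib]
    rw [indSum hbinj (hbmemT b1 (by rw [hS]; right; right; left; rfl)),
      indSum hbinj (hbmemT b1' (by rw [hS]; right; right; right; left; rfl)),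
      indSum hbinj (hbmemT βj (by rw [hS]; right; left; rfl)),
      indSum hbinj (hbmemT bj (by rw [hS]; right; right; right; right; left; rfl)),
      indSum hbinj (hbmemT bj' (by rw [hS]; right; right; right; right; right; rfl)),
      indSum hbinj (hbmemT β1 (by rw [hS]; left; rfl))]
    have h1eq : b1 + b1' = x + β1 := e1.symm
    have hjeq : bj + bj' = x + βj := ej.symm
    rw [show b1 + b1' + βj - (bj + bj' + β1) = (b1 + b1') + βj - ((bj + bj') + β1) from rfl,
      h1eq, hjeq]
    abel
  exact hB.2 b ι hbinj hbB habs hnontriv hsum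

theorem fromKup {H : Type*} [AddCommGroup H] (B : Set H) (hB : QuasiIndep B)
    (A' A : Set H) (hsub : A' ⊆ A) (hAA : A + A ⊆ B + B) (hcard : A'.encard = 4)
    (c : H) (hc : (· + c) '' A' ⊆ B) :
    (fun a => a - c) '' A ⊆ B := by
  -- extract 4 distinct elements of A'
  have hfin : A'.Finite := Set.finite_of_encard_eq_coe (k := 4) (by exact_mod_cast hcard)
  have hscard : hfin.toFinset.card = 4 := by
    have := hfin.encard_eq_coe_toFinset_card
    rw [hcard] at this
    exact_mod_cast this.symm
  set e4 := hfin.toFinset.equivFinOfCardEq hscard with he4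
  set af : Fin 4 → H := fun i => (e4.symm i : H) with haf
  have hafinj : Function.Injective af := fun i j hij => e4.symm.injective (Subtype.ext hij)
  have hafmem : ∀ i, af i ∈ A' := fun i => hfin.mem_toFinset.1 (e4.symm i).2
  set β : Fin 4 → H := fun i => af i + c with hβ
  have hβinj : Function.Injective β := fun i j hij => hafinj (by
    have : af i + c = af j + c := hij
    exact add_right_cancel this)
  have hβB : ∀ i, β i ∈ B := fun i => hc ⟨af i, hafmem i, rfl⟩
  intro y hy
  obtain ⟨a, haA, rfl⟩ := hy
  -- representations
  have hrep : ∀ i : Fin 4, ∃ u ∈ B, ∃ v ∈ B, u + v = a + af i := by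
    intro i
    have : a + af i ∈ A + A := Set.add_mem_add haA (hsub (hafmem i))
    exact hAA this
  choose u hu v hv huv using hrep
  set x : H := a - c with hx
  have ex : ∀ i, x + β i = u i + v i := by
    intro i
    rw [hx, hβ, huv i]
    beta_reduce
    abel
  by_contra hxB
  -- β i is never equal to u i or v i
  have hneu : ∀ i, β i ≠ u i := by
    intro i h
    apply hxB
    have hthis : x = v i := by
      have h2 := ex i
      rw [h, add_comm (u i) (v i)] at h2
      exact add_right_cancel h2
    show x ∈ B
    rw [hthis]
    exact hv i
  have hnev : ∀ i, β i ≠ v i := by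
    intro i h
    apply hxB
    have hthis : x = u i := by
      have h2 := ex i
      rw [h] at h2
      exact add_right_cancel h2
    show x ∈ B
    rw [hthis]
    exact hu i
  -- find a good index j ≠ 0
  have hkey : ∀ j : Fin 4, j ≠ 0 → ¬(u 0 = v 0 ∧ u 0 = β j) → ¬(u j = v j ∧ u j = β 0) → False := by
    intro j hj0 g1 gj
    exact keyLem B hB x (β 0) (β j) (u 0) (v 0) (u j) (v j)
      (hβB 0) (hβB j) (hu 0) (hv 0) (hu j) (hv j)
      (ex 0) (ex j)
      (fun h => hj0 (hβinj h).symm) (hneu 0) (hnev 0) g1 gj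
  -- type-A badness can hold for at most one j, same for type-B
  have hA : ∀ j k : Fin 4, (u 0 = v 0 ∧ u 0 = β j) → (u 0 = v 0 ∧ u 0 = β k) → j = k := by
    intro j k hj hk
    exact hβinj (hj.2.symm.trans hk.2)
  have hBb : ∀ j k : Fin 4, (u j = v j ∧ u j = β 0) → (u k = v k ∧ u k = β 0) → j = k := by
    intro j k hj hk
    apply hβinj
    have hjx : x + β j = β 0 + β 0 := by rw [ex j, ← hj.1, hj.2]
    have hkx : x + β k = β 0 + β 0 := by rw [ex k, ← hk.1, hk.2]
    exact add_left_cancel (hjx.trans hkx.symm)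
  by_cases g11 : (u 0 = v 0 ∧ u 0 = β 1)
  · by_cases g22 : (u 2 = v 2 ∧ u 2 = β 0)
    · -- j = 3 must be good
      refine hkey 3 (by decide) ?_ ?_
      · intro h; exact absurd (hA 1 3 g11 h) (by decide)
      · intro h; exact absurd (hBb 2 3 g22 h) (by decide)
    · by_cases g21 : (u 0 = v 0 ∧ u 0 = β 2)
      · exact absurd (hA 1 2 g11 g21) (by decide)
      · exact hkey 2 (by decide) g21 g22
  · by_cases g12 : (u 1 = v 1 ∧ u 1 = β 0)
    · by_cases g21 : (u 0 = v 0 ∧ u 0 = β 2)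
      · -- j = 3 must be good
        refine hkey 3 (by decide) ?_ ?_
        · intro h; exact absurd (hA 2 3 g21 h) (by decide)
        · intro h; exact absurd (hBb 1 3 g12 h) (by decide)
      · by_cases g22 : (u 2 = v 2 ∧ u 2 = β 0)
        · exact absurd (hBb 1 2 g12 g22) (by decide)
        · exact hkey 2 (by decide) g21 g22
    · exact hkey 1 (by decide) g11 g12
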